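/- arXiv:1801.04032 — 2 statements merged into one kernel-verified Lean document; each statement's English description precedes it below -/
import Mathlib

section
/- Let F be a type of fields, Store = F → ℤ, and let op₁, …, op_n be store transformers where each op_i reads only R_i ⊆ F and writes only W_i ⊆ F. Call indices i, j conflicting if (R_i ∩ W_j) ∪ (R_j ∩ W_i) ∪ (W_i ∩ W_j) ≠ ∅. If σ_perm : {1..n} → {1..n} is a permutation such that for every conflicting pair i < j one has σ_perm⁻¹ applied preserves their order (i.e., the positions of i and j in the permuted sequence occur in the same relative order as in the original), then for every initial store σ, applying op₁, …, op_n in the original order and applying them in the permuted order yield the same final store. (Conflict-equivalence implies final-state equivalence.) -/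
/-- A store transformer `f` on stores `F → ℤ` *reads only* `R` and *writes only*
`W` when: for every store `σ` and field `x ∉ W`, `f σ x = σ x`; and for all
stores `σ, σ'` agreeing on `R`, the results `f σ` and `f σ'` agree on `W`. -/
def ReadsOnlyWritesOnly {F : Type*} (f : (F → ℤ) → (F → ℤ)) (R W : Set F) : Prop :=
  (∀ (σ : F → ℤ) (x : F), x ∉ W → f σ x = σ x) ∧
  (∀ σ σ' : F → ℤ, (∀ x ∈ R, σ x = σ' x) → ∀ x ∈ W, f σ x = f σ' x)

/-- Apply a sequence of store transformers, left to right, to an initial store. -/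
def applySeq {F : Type*} (ops : List ((F → ℤ) → (F → ℤ))) (σ : F → ℤ) : F → ℤ :=
  ops.foldl (fun τ op => op τ) σ

section AuxConflictPerm
variable {F : Type*}

lemma commute_of_disjoint {f g : (F → ℤ) → (F → ℤ)} {Rf Wf Rg Wg : Set F}
    (hf : ReadsOnlyWritesOnly f Rf Wf) (hg : ReadsOnlyWritesOnly g Rg Wg)
    (h1 : Rf ∩ Wg = ∅) (h2 : Rg ∩ Wf = ∅) (h3 : Wf ∩ Wg = ∅) (σ : F → ℤ) :
    f (g σ) = g (f σ) := by
  funext x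
  by_cases hWf : x ∈ Wf <;> by_cases hWg : x ∈ Wg
  · exact absurd (Set.mem_inter hWf hWg) (by simp [Set.eq_empty_iff_forall_notMem] at h3; exact fun hm => h3 x hm.1 hm.2)
  · have e1 : g (f σ) x = f σ x := hg.1 _ x hWg
    have e2 : f (g σ) x = f σ x := by
      refine hf.2 (g σ) σ (fun y hy => hg.1 σ y ?_) x hWf
      intro hyW
      exact absurd (Set.mem_inter hy hyW) (by simp [Set.eq_empty_iff_forall_notMem] at h1; exact fun hm => h1 y hm.1 hm.2)
    rw [e1, e2]
  · have e1 : f (g σ) x = g σ x := hf.1 _ x hWf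
    have e2 : g (f σ) x = g σ x := by
      refine hg.2 (f σ) σ (fun y hy => hf.1 σ y ?_) x hWg
      intro hyW
      exact absurd (Set.mem_inter hy hyW) (by simp [Set.eq_empty_iff_forall_notMem] at h2; exact fun hm => h2 y hm.1 hm.2)
    rw [e1, e2]
  · rw [hf.1 _ x hWf, hg.1 _ x hWg, hg.1 _ x hWg, hf.1 _ x hWf]

lemma applySeq_swap (l1 l2 : List ((F → ℤ) → (F → ℤ))) (a b : (F → ℤ) → (F → ℤ))
    (hab : ∀ σ, a (b σ) = b (a σ)) (σ : F → ℤ) :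
    applySeq (l1 ++ a :: b :: l2) σ = applySeq (l1 ++ b :: a :: l2) σ := by
  simp [applySeq, List.foldl_append, List.foldl_cons, hab]

lemma swap_lt {n : ℕ} {t u x y : Fin n} (htu : (t : ℕ) + 1 = (u : ℕ))
    (hxy : x < y) (hne : ¬(x = t ∧ y = u)) :
    Equiv.swap t u x < Equiv.swap t u y := by
  simp only [Equiv.swap_apply_def]
  split_ifs <;> simp only [Fin.ext_iff, Fin.lt_def, not_and] at * <;> omega

lemma ofFn_decomp {α : Type*} {n : ℕ} (v : Fin n → α) (t : ℕ) (ht : t + 1 < n) :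
    List.ofFn v = (List.ofFn v).take t ++ v ⟨t, by omega⟩ :: v ⟨t+1, ht⟩ :: (List.ofFn v).drop (t+2) := by
  conv_lhs => rw [← List.take_append_drop t (List.ofFn v)]
  congr 1
  rw [List.drop_eq_getElem_cons (by simp; omega), List.drop_eq_getElem_cons (by simp; omega)]
  simp [List.getElem_ofFn]

lemma applySeq_ofFn_swap {n : ℕ} (v w : Fin n → ((F → ℤ) → (F → ℤ))) (t : ℕ) (ht : t + 1 < n)
    (hagree : ∀ k : Fin n, (k : ℕ) ≠ t → (k : ℕ) ≠ t + 1 → v k = w k)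
    (h2 : v ⟨t, by omega⟩ = w ⟨t+1, ht⟩) (h3 : v ⟨t+1, ht⟩ = w ⟨t, by omega⟩)
    (hc : ∀ σ, w ⟨t, by omega⟩ (w ⟨t+1, ht⟩ σ) = w ⟨t+1, ht⟩ (w ⟨t, by omega⟩ σ))
    (σ : F → ℤ) :
    applySeq (List.ofFn v) σ = applySeq (List.ofFn w) σ := by
  have htake : (List.ofFn v).take t = (List.ofFn w).take t := by
    apply List.ext_getElem (by simp)
    intro i hi1 hi2
    have hit : i < t := by simp at hi1; omega
    have hin : i < n := by simp at hi1; omega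
    simp only [List.getElem_take, List.getElem_ofFn]
    exact hagree ⟨i, hin⟩ (show i ≠ t by omega) (show i ≠ t + 1 by omega)
  have hdrop : (List.ofFn v).drop (t+2) = (List.ofFn w).drop (t+2) := by
    apply List.ext_getElem (by simp)
    intro i hi1 hi2
    have hin : t + 2 + i < n := by simp at hi1; omega
    simp only [List.getElem_drop, List.getElem_ofFn]
    exact hagree ⟨t + 2 + i, hin⟩ (show t + 2 + i ≠ t by omega) (show t + 2 + i ≠ t + 1 by omega)
  rw [ofFn_decomp v t ht, ofFn_decomp w t ht, htake, hdrop, h2, h3]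
  exact applySeq_swap _ _ _ _ (fun σ => (hc σ).symm) σ

end AuxConflictPerm

/-- (Conflict-equivalence implies final-state equivalence.)
Given store transformers `op 0, …, op (n-1)` reading only `R i` and writing only
`W i`, call `i, j` conflicting if `(R i ∩ W j) ∪ (R j ∩ W i) ∪ (W i ∩ W j) ≠ ∅`.
If `p` is a permutation of `Fin n` (sending each index to its position in the
permuted sequence) such that every conflicting pair `i < j` keeps its relative
order (`p i < p j`), then for every initial store, applying the operations in
the original order and in the permuted order yields the same final store. -/
theorem conflict_preserving_perm_final_state {F : Type*} (n : ℕ)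
    (ops : Fin n → ((F → ℤ) → (F → ℤ))) (R W : Fin n → Set F)
    (h : ∀ i, ReadsOnlyWritesOnly (ops i) (R i) (W i))
    (p : Equiv.Perm (Fin n))
    (hp : ∀ i j : Fin n, ((R i ∩ W j) ∪ (R j ∩ W i) ∪ (W i ∩ W j)) ≠ ∅ →
      i < j → p i < p j) :
    ∀ σ : F → ℤ,
      applySeq (List.ofFn ops) σ = applySeq (List.ofFn (fun k => ops (p.symm k))) σ := by
  suffices H : ∀ (m : ℕ) (p : Equiv.Perm (Fin n)),
      (Finset.univ.filter (fun q : Fin n × Fin n => q.1 < q.2 ∧ p q.2 < p q.1)).card ≤ m →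
      (∀ i j : Fin n, ((R i ∩ W j) ∪ (R j ∩ W i) ∪ (W i ∩ W j)) ≠ ∅ → i < j → p i < p j) →
      ∀ σ : F → ℤ,
        applySeq (List.ofFn ops) σ = applySeq (List.ofFn (fun k => ops (p.symm k))) σ by
    exact H _ p le_rfl hp
  clear hp p
  intro m
  induction m with
  | zero =>
    intro p hcard hp σ
    have hempty : (Finset.univ.filter (fun q : Fin n × Fin n => q.1 < q.2 ∧ p q.2 < p q.1)) = ∅ :=
      Finset.card_eq_zero.mp (Nat.le_zero.mp hcard)
    have hmono : StrictMono p := by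
      intro a b hab
      by_contra hle
      have hne : p a ≠ p b := fun e => absurd (p.injective e) (ne_of_lt hab)
      have hlt : p b < p a := lt_of_le_of_ne (not_lt.mp hle) (Ne.symm hne)
      have : (a, b) ∈ (Finset.univ.filter (fun q : Fin n × Fin n => q.1 < q.2 ∧ p q.2 < p q.1)) := by
        simp [hab, hlt]
      rw [hempty] at this
      exact absurd this (Finset.notMem_empty _)
    have hid : (p : Fin n → Fin n) = id := by
      have hw : WellFoundedLT (Fin n) := inferInstance
      have := @StrictMono.range_inj (Fin n) (Fin n) _ _ hw _ _ hmono strictMono_id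
      apply this.mp
      simp [Set.range_eq_univ.mpr p.surjective]
    have hsymm : ∀ k, p.symm k = k := by
      intro k
      have := congrFun hid (p.symm k)
      simpa using this.symm
    simp only [hsymm]
  | succ m IH =>
    intro p hcard hp σ
    by_cases hms : (Finset.univ.filter (fun q : Fin n × Fin n => q.1 < q.2 ∧ p q.2 < p q.1)).card ≤ m
    · exact IH p hms hp σ
    by_cases hadj : ∃ (t : ℕ) (htn : t + 1 < n), p.symm ⟨t+1, htn⟩ < p.symm ⟨t, by omega⟩
    · obtain ⟨t, htn, hlt⟩ := hadj
      set tc : Fin n := ⟨t, by omega⟩ with htc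
      set ts : Fin n := ⟨t+1, htn⟩ with hts
      set i : Fin n := p.symm ts with hi
      set j : Fin n := p.symm tc with hj
      have hij : i < j := hlt
      have htcts : tc < ts := by simp [htc, hts, Fin.lt_def]
      set s : Equiv.Perm (Fin n) := Equiv.swap tc ts with hs
      set p' : Equiv.Perm (Fin n) := p.trans s with hp'def
      have hp'symm : ∀ k, p'.symm k = p.symm (s k) := by
        intro k
        simp [hp'def, hs, Equiv.symm_trans_apply, Equiv.symm_swap]
      have hp'app : ∀ k, p' k = s (p k) := fun k => rfl
      -- conflicting pairs still ordered
      have hp'ord : ∀ a b : Fin n, ((R a ∩ W b) ∪ (R b ∩ W a) ∪ (W a ∩ W b)) ≠ ∅ → a < b → p' a < p' b := by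
        intro a b hconf hab
        have hpab := hp a b hconf hab
        rw [hp'app, hp'app]
        refine swap_lt rfl hpab ?_
        rintro ⟨e1, e2⟩
        have : a = j := by rw [hj, ← e1]; simp
        have hb : b = i := by rw [hi, ← e2]; simp
        rw [this, hb] at hab
        exact absurd hab (not_lt.mpr (le_of_lt hij))
      -- inversion count decreases
      have hsub : (Finset.univ.filter (fun q : Fin n × Fin n => q.1 < q.2 ∧ p' q.2 < p' q.1)) ⊆
          ((Finset.univ.filter (fun q : Fin n × Fin n => q.1 < q.2 ∧ p q.2 < p q.1)).erase (i, j)) := by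
        intro q hq
        simp only [Finset.mem_filter, Finset.mem_univ, true_and] at hq
        rw [Finset.mem_erase]
        constructor
        · rintro rfl
          have : p' j < p' i := hq.2
          rw [hp'app, hp'app] at this
          have e1 : p j = tc := by simp [hj]
          have e2 : p i = ts := by simp [hi]
          rw [e1, e2, Equiv.swap_apply_left, Equiv.swap_apply_right] at this
          exact absurd this (not_lt.mpr (le_of_lt htcts))
        · simp only [Finset.mem_filter, Finset.mem_univ, true_and]
          refine ⟨hq.1, ?_⟩
          rcases lt_trichotomy (p q.1) (p q.2) with hlt' | heq | hgt
          · exfalso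
            have : s (p q.1) < s (p q.2) := by
              refine swap_lt rfl hlt' ?_
              rintro ⟨e1, e2⟩
              have ha : q.1 = j := by rw [hj, ← e1]; simp
              have hb : q.2 = i := by rw [hi, ← e2]; simp
              have := hq.1
              rw [ha, hb] at this
              exact absurd this (not_lt.mpr (le_of_lt hij))
            rw [hp'app, hp'app] at hq
            exact absurd hq.2 (not_lt.mpr (le_of_lt this))
          · exact absurd (p.injective heq) (ne_of_lt hq.1)
          · exact hgt
      have hmem : (i, j) ∈ (Finset.univ.filter (fun q : Fin n × Fin n => q.1 < q.2 ∧ p q.2 < p q.1)) := by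
        simp only [Finset.mem_filter, Finset.mem_univ, true_and]
        refine ⟨hij, ?_⟩
        have e1 : p j = tc := by simp [hj]
        have e2 : p i = ts := by simp [hi]
        rw [e1, e2]; exact htcts
      have hcard' : (Finset.univ.filter (fun q : Fin n × Fin n => q.1 < q.2 ∧ p' q.2 < p' q.1)).card ≤ m := by
        calc _ ≤ ((Finset.univ.filter (fun q : Fin n × Fin n => q.1 < q.2 ∧ p q.2 < p q.1)).erase (i, j)).card :=
              Finset.card_le_card hsub
          _ = (Finset.univ.filter (fun q : Fin n × Fin n => q.1 < q.2 ∧ p q.2 < p q.1)).card - 1 :=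
              Finset.card_erase_of_mem hmem
          _ ≤ m := by omega
      have hIH := IH p' hcard' hp'ord σ
      rw [hIH]
      -- now swap step
      refine applySeq_ofFn_swap (fun k => ops (p'.symm k)) (fun k => ops (p.symm k)) t htn ?_ ?_ ?_ ?_ σ
      · intro k hk1 hk2
        have hsk : s k = k := by
          apply Equiv.swap_apply_of_ne_of_ne
          · intro e; rw [e] at hk1; exact hk1 rfl
          · intro e; rw [e] at hk2; exact hk2 rfl
        exact congrArg ops ((hp'symm k).trans (congrArg p.symm hsk))
      · exact congrArg ops ((hp'symm tc).trans (congrArg p.symm (Equiv.swap_apply_left tc ts)))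
      · exact congrArg ops ((hp'symm ts).trans (congrArg p.symm (Equiv.swap_apply_right tc ts)))
      · intro τ
        show ops j (ops i τ) = ops i (ops j τ)
        have hnc : ((R i ∩ W j) ∪ (R j ∩ W i) ∪ (W i ∩ W j)) = ∅ := by
          by_contra hne
          have := hp i j hne hij
          have e1 : p j = tc := by simp [hj]
          have e2 : p i = ts := by simp [hi]
          rw [e1, e2] at this
          exact absurd this (not_lt.mpr (le_of_lt htcts))
        rw [Set.union_empty_iff, Set.union_empty_iff] at hnc
        exact commute_of_disjoint (h j) (h i) hnc.1.2 hnc.1.1 (by rw [Set.inter_comm]; exact hnc.2) τ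
    · -- no adjacent inversion ⇒ p.symm strictMono ⇒ contradiction
      exfalso
      push_neg at hadj
      have hstep : ∀ (t : ℕ) (htn : t + 1 < n), p.symm ⟨t, by omega⟩ < p.symm ⟨t+1, htn⟩ := by
        intro t htn
        have h1 := hadj t htn
        have hne : p.symm (⟨t, by omega⟩ : Fin n) ≠ p.symm ⟨t+1, htn⟩ := by
          intro e
          have := p.symm.injective e
          simp [Fin.ext_iff] at this
        exact lt_of_le_of_ne h1 hne
      have hmono : ∀ (d : ℕ) (a b : Fin n), (b : ℕ) = a + d + 1 → p.symm a < p.symm b := by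
        intro d
        induction d with
        | zero =>
          intro a b hab
          have : b = ⟨(a : ℕ) + 1, by omega⟩ := by simp [Fin.ext_iff, hab]
          rw [this]
          have := hstep a (by omega)
          simpa using this
        | succ d IHd =>
          intro a b hab
          have hcn : (a : ℕ) + d + 1 < n := by omega
          set c : Fin n := ⟨(a : ℕ) + d + 1, hcn⟩ with hc
          have h1 : p.symm a < p.symm c := IHd a c (by simp [hc])
          have h2 : p.symm c < p.symm b := by
            have := hstep ((a : ℕ) + d + 1) (by omega)
            have hb : b = ⟨(a : ℕ) + d + 2, by omega⟩ := by simp [Fin.ext_iff]; omega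
            rw [hb]
            convert this using 2
          exact lt_trans h1 h2
      have hsm : StrictMono p.symm := by
        intro a b hab
        have : (b : ℕ) = (a : ℕ) + ((b : ℕ) - (a : ℕ) - 1) + 1 := by
          have := Fin.lt_def.mp hab; omega
        exact hmono _ a b this
      have hpm : StrictMono p := by
        intro a b hab
        rcases lt_trichotomy (p a) (p b) with h' | h' | h'
        · exact h'
        · exact absurd (p.injective h') (ne_of_lt hab)
        · have := hsm h'
          simp at this
          exact absurd hab (not_lt.mpr (le_of_lt this))
      have : (Finset.univ.filter (fun q : Fin n × Fin n => q.1 < q.2 ∧ p q.2 < p q.1)) = ∅ := by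
        rw [Finset.filter_eq_empty_iff]
        rintro q -
        rintro ⟨h1, h2⟩
        exact absurd (hpm h1) (not_lt.mpr (le_of_lt h2))
      rw [this] at hms
      simp at hms
end

section
/- Let F be a type of fields, Store = F → ℤ, and let f, g be store transformers reading only R_f, R_g and writing only W_f, W_g respectively, with (R_f ∩ W_g) ∪ (R_g ∩ W_f) ∪ (W_f ∩ W_g) = ∅ (f and g do not conflict). Then for any sequence of store transformers h₁, …, h_k and p₁, …, p_m and any initial store σ, executing p₁, …, p_m, f, g, h₁, …, h_k and executing p₁, …, p_m, g, f, h₁, …, h_k from σ yield the same final store; i.e., swapping two adjacent non-conflicting operations anywhere in a sequence preserves the final state. -/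
/-- Let `f, g` be store transformers reading only `R_f, R_g` and
writing only `W_f, W_g`, with `(R_f ∩ W_g) ∪ (R_g ∩ W_f) ∪ (W_f ∩ W_g) = ∅`
(`f` and `g` do not conflict). Then for any sequences `p₁, …, p_m` and
`h₁, …, h_k` of store transformers and any initial store `σ`, executing
`p₁, …, p_m, f, g, h₁, …, h_k` and `p₁, …, p_m, g, f, h₁, …, h_k` from `σ`
yields the same final store. -/
theorem swap_adjacent_nonconflicting {F : Type*} (f g : (F → ℤ) → (F → ℤ))
    (Rf Wf Rg Wg : Set F)
    (hf : ReadsOnlyWritesOnly f Rf Wf) (hg : ReadsOnlyWritesOnly g Rg Wg)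
    (hconf : ((Rf ∩ Wg) ∪ (Rg ∩ Wf) ∪ (Wf ∩ Wg)) = ∅) :
    ∀ (ps hs : List ((F → ℤ) → (F → ℤ))) (σ : F → ℤ),
      applySeq (ps ++ [f, g] ++ hs) σ = applySeq (ps ++ [g, f] ++ hs) σ := by
  have hRfWg : ∀ x, x ∈ Rf → x ∉ Wg := by
    intro x hx hx'
    have : x ∈ ((Rf ∩ Wg) ∪ (Rg ∩ Wf) ∪ (Wf ∩ Wg)) := Or.inl (Or.inl ⟨hx, hx'⟩)
    simp [hconf] at this
  have hRgWf : ∀ x, x ∈ Rg → x ∉ Wf := by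
    intro x hx hx'
    have : x ∈ ((Rf ∩ Wg) ∪ (Rg ∩ Wf) ∪ (Wf ∩ Wg)) := Or.inl (Or.inr ⟨hx, hx'⟩)
    simp [hconf] at this
  have hWfWg : ∀ x, x ∈ Wf → x ∉ Wg := by
    intro x hx hx'
    have : x ∈ ((Rf ∩ Wg) ∪ (Rg ∩ Wf) ∪ (Wf ∩ Wg)) := Or.inr ⟨hx, hx'⟩
    simp [hconf] at this
  have key : ∀ τ : F → ℤ, g (f τ) = f (g τ) := by
    intro τ
    funext x
    by_cases hxf : x ∈ Wf
    · have hxg : x ∉ Wg := hWfWg x hxf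
      rw [hg.1 _ x hxg]
      have : f (g τ) x = f τ x := by
        apply hf.2
        intro y hy
        exact hg.1 τ y (hRfWg y hy)
        exact hxf
      rw [this]
    · by_cases hxg : x ∈ Wg
      · rw [hf.1 _ x hxf]
        apply hg.2
        intro y hy
        exact hf.1 τ y (hRgWf y hy)
        exact hxg
      · rw [hg.1 _ x hxg, hf.1 _ x hxf, hf.1 _ x hxf, hg.1 _ x hxg]
  intro ps hs σ
  simp only [applySeq, List.foldl_append]
  simp [key]
end
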